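/- In a groupoid G, a set Λ of morphisms admits an inverse — that is, a set Λ' of morphisms with Λ·Λ' = r(Λ) and Λ'·Λ = s(Λ) — if and only if the source map γ ↦ s(γ) and the target map γ ↦ r(γ) are both injective on Λ; and in that case Λ* = {γ⁻¹ : γ ∈ Λ} is such an inverse. (This is the set-theoretic skeleton of Theorem 4.7: a Lagrangian submanifold of the symplectic groupoid T*G is invertible if and only if it is a Lagrangian bisection, and then its image under the groupoid inversion is an inverse.) -/

import Mathlib

open CategoryTheory

/-- A morphism of a groupoid `G`, bundled with its source and target objects. -/
structure GpdMor (G : Type*) [Groupoid G] where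
  src : G
  tgt : G
  hom : src ⟶ tgt

namespace GpdMor

variable {G : Type*} [Groupoid G]

/-- The composition `γ₁ ∘ γ₂`, defined when `s(γ₁) = r(γ₂)`; its source is `s(γ₂)` and its
target is `r(γ₁)`. -/
def comp (γ₁ γ₂ : GpdMor G) (h : γ₁.src = γ₂.tgt) : GpdMor G :=
  ⟨γ₂.src, γ₁.tgt, γ₂.hom ≫ eqToHom h.symm ≫ γ₁.hom⟩

/-- The inverse morphism `γ⁻¹`. -/
noncomputable def inv (γ : GpdMor G) : GpdMor G :=
  ⟨γ.tgt, γ.src, CategoryTheory.inv γ.hom⟩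

/-- The identity morphism at an object `x`. -/
def id (x : G) : GpdMor G := ⟨x, x, 𝟙 x⟩

/-- The product `Λ₁·Λ₂ = {γ₁ ∘ γ₂ : γ₁ ∈ Λ₁, γ₂ ∈ Λ₂, s(γ₁) = r(γ₂)}`. -/
def setMul (Λ₁ Λ₂ : Set (GpdMor G)) : Set (GpdMor G) :=
  {γ | ∃ γ₁ ∈ Λ₁, ∃ γ₂ ∈ Λ₂, ∃ h : γ₁.src = γ₂.tgt, γ = comp γ₁ γ₂ h}

/-- `r(Λ) = {id_{r(γ)} : γ ∈ Λ}`. -/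
def tgtSet (Λ : Set (GpdMor G)) : Set (GpdMor G) :=
  {δ | ∃ γ ∈ Λ, δ = GpdMor.id γ.tgt}

/-- `s(Λ) = {id_{s(γ)} : γ ∈ Λ}`. -/
def srcSet (Λ : Set (GpdMor G)) : Set (GpdMor G) :=
  {δ | ∃ γ ∈ Λ, δ = GpdMor.id γ.src}

end GpdMor

open GpdMor

/-- `Λ* = {γ⁻¹ : γ ∈ Λ}`. -/
noncomputable def starSet {G : Type*} [Groupoid G] (Λ : Set (GpdMor G)) : Set (GpdMor G) :=
  GpdMor.inv '' Λ

section Aux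

variable {G : Type*} [Groupoid G]

lemma GpdMor.ext' {γ δ : GpdMor G} (hs : γ.src = δ.src) (ht : γ.tgt = δ.tgt)
    (hh : γ.hom = eqToHom hs ≫ δ.hom ≫ eqToHom ht.symm) : γ = δ := by
  obtain ⟨s, t, f⟩ := γ
  obtain ⟨s', t', g⟩ := δ
  dsimp at hs ht hh
  subst hs; subst ht
  simp only [eqToHom_refl, Category.id_comp, Category.comp_id] at hh
  subst hh; rfl

lemma GpdMor.eq_destruct {γ δ : GpdMor G} (h : γ = δ) :
    ∃ (hs : γ.src = δ.src) (ht : γ.tgt = δ.tgt),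
      γ.hom = eqToHom hs ≫ δ.hom ≫ eqToHom ht.symm := by
  subst h; exact ⟨rfl, rfl, by simp⟩

lemma starSet_inverse {Λ : Set (GpdMor G)}
    (hsrc : ∀ γ ∈ Λ, ∀ δ ∈ Λ, γ.src = δ.src → γ = δ)
    (htgt : ∀ γ ∈ Λ, ∀ δ ∈ Λ, γ.tgt = δ.tgt → γ = δ) :
    setMul Λ (starSet Λ) = tgtSet Λ ∧ setMul (starSet Λ) Λ = srcSet Λ := by
  constructor
  · ext δ
    constructor
    · rintro ⟨γ₁, h₁, _, ⟨μ, hμ, rfl⟩, h, rfl⟩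
      obtain rfl : γ₁ = μ := hsrc γ₁ h₁ μ hμ h
      refine ⟨γ₁, h₁, ?_⟩
      exact GpdMor.ext' rfl rfl (by simp [GpdMor.comp, GpdMor.inv, GpdMor.id]; rfl)
    · rintro ⟨γ, hγ, rfl⟩
      refine ⟨γ, hγ, GpdMor.inv γ, ⟨γ, hγ, rfl⟩, rfl, ?_⟩
      refine GpdMor.ext' rfl rfl ?_
      simp [GpdMor.comp, GpdMor.inv, GpdMor.id]; rfl
  · ext δ
    constructor
    · rintro ⟨_, ⟨μ, hμ, rfl⟩, γ₂, h₂, h, rfl⟩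
      obtain rfl : μ = γ₂ := htgt μ hμ γ₂ h₂ h
      refine ⟨μ, hμ, ?_⟩
      exact GpdMor.ext' rfl rfl (by simp [GpdMor.comp, GpdMor.inv, GpdMor.id]; rfl)
    · rintro ⟨γ, hγ, rfl⟩
      refine ⟨GpdMor.inv γ, ⟨γ, hγ, rfl⟩, γ, hγ, rfl, ?_⟩
      refine GpdMor.ext' rfl rfl ?_
      simp [GpdMor.comp, GpdMor.inv, GpdMor.id]; rfl

end Aux

/-- A set `Λ` of morphisms of a groupoid admits an inverse — a set `Λ'` with
`Λ·Λ' = r(Λ)` and `Λ'·Λ = s(Λ)` — if and only if the source and target maps are both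
injective on `Λ`; and in that case `Λ* = {γ⁻¹ : γ ∈ Λ}` is such an inverse. -/
theorem invertible_iff_bisection
    {G : Type*} [Groupoid G] (Λ : Set (GpdMor G)) :
    ((∃ Λ' : Set (GpdMor G), setMul Λ Λ' = tgtSet Λ ∧ setMul Λ' Λ = srcSet Λ) ↔
      ((∀ γ ∈ Λ, ∀ δ ∈ Λ, γ.src = δ.src → γ = δ) ∧
        (∀ γ ∈ Λ, ∀ δ ∈ Λ, γ.tgt = δ.tgt → γ = δ))) ∧
    (((∀ γ ∈ Λ, ∀ δ ∈ Λ, γ.src = δ.src → γ = δ) ∧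
        (∀ γ ∈ Λ, ∀ δ ∈ Λ, γ.tgt = δ.tgt → γ = δ)) →
      setMul Λ (starSet Λ) = tgtSet Λ ∧ setMul (starSet Λ) Λ = srcSet Λ) := by
  constructor
  · constructor
    · rintro ⟨Λ', hR, hS⟩
      constructor
      · -- source injectivity
        intro γ hγ δ hδ hsd
        have hx : GpdMor.id γ.src ∈ srcSet Λ := ⟨γ, hγ, rfl⟩
        rw [← hS] at hx
        obtain ⟨a, ha, b, hb, h, heq⟩ := hx
        obtain ⟨hs0, ht0, -⟩ := GpdMor.eq_destruct heq
        -- ht0 : (id γ.src).tgt = (comp a b h).tgt, i.e. γ.src = a.tgt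
        have ht : γ.src = a.tgt := ht0
        have ht' : δ.src = a.tgt := hsd.symm.trans ht
        have hcγ : GpdMor.comp γ a ht ∈ setMul Λ Λ' := ⟨γ, hγ, a, ha, ht, rfl⟩
        have hcδ : GpdMor.comp δ a ht' ∈ setMul Λ Λ' := ⟨δ, hδ, a, ha, ht', rfl⟩
        rw [hR] at hcγ hcδ
        obtain ⟨c, hc, hceq⟩ := hcγ
        obtain ⟨d, hd, hdeq⟩ := hcδ
        obtain ⟨hs1, ht1, hh1⟩ := GpdMor.eq_destruct hceq
        obtain ⟨hs2, ht2, hh2⟩ := GpdMor.eq_destruct hdeq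
        change a.src = c.tgt at hs1; change γ.tgt = c.tgt at ht1
        change a.src = d.tgt at hs2; change δ.tgt = d.tgt at ht2
        -- hs1 : a.src = c.tgt, ht1 : γ.tgt = c.tgt
        have htt : γ.tgt = δ.tgt := by
          have e1 : γ.tgt = c.tgt := ht1
          have e2 : a.src = c.tgt := hs1
          have e3 : a.src = d.tgt := hs2
          have e4 : δ.tgt = d.tgt := ht2
          rw [e1, ← e2, e3, ← e4]
        refine GpdMor.ext' hsd htt ?_
        simp only [GpdMor.comp, GpdMor.id] at hh1 hh2
        -- hh1 : a.hom ≫ eqToHom ht.symm ≫ γ.hom = eqToHom hs1 ≫ 𝟙 _ ≫ eqToHom ht1.symm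
        have key1 : γ.hom = eqToHom ht ≫ CategoryTheory.inv a.hom ≫ eqToHom hs1 ≫
            𝟙 c.tgt ≫ eqToHom ht1.symm := by
          rw [← hh1]; simp
        have key2 : δ.hom = eqToHom ht' ≫ CategoryTheory.inv a.hom ≫ eqToHom hs2 ≫
            𝟙 d.tgt ≫ eqToHom ht2.symm := by
          rw [← hh2]; simp
        rw [key1, key2]
        simp only [GpdMor.comp, GpdMor.id, Category.id_comp, Category.comp_id,
          eqToHom_trans, eqToHom_trans_assoc, Category.assoc]
      · -- target injectivity
        intro γ hγ δ hδ htd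
        have hx : GpdMor.id γ.tgt ∈ tgtSet Λ := ⟨γ, hγ, rfl⟩
        rw [← hR] at hx
        obtain ⟨b, hb, a, ha, h, heq⟩ := hx
        obtain ⟨hs0, ht0, -⟩ := GpdMor.eq_destruct heq
        -- hs0 : γ.tgt = a.src
        have hs : a.src = γ.tgt := hs0.symm
        have hs' : a.src = δ.tgt := hs.trans htd
        have hcγ : GpdMor.comp a γ hs ∈ setMul Λ' Λ := ⟨a, ha, γ, hγ, hs, rfl⟩
        have hcδ : GpdMor.comp a δ hs' ∈ setMul Λ' Λ := ⟨a, ha, δ, hδ, hs', rfl⟩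
        rw [hS] at hcγ hcδ
        obtain ⟨c, hc, hceq⟩ := hcγ
        obtain ⟨d, hd, hdeq⟩ := hcδ
        obtain ⟨hs1, ht1, hh1⟩ := GpdMor.eq_destruct hceq
        obtain ⟨hs2, ht2, hh2⟩ := GpdMor.eq_destruct hdeq
        change γ.src = c.src at hs1; change a.tgt = c.src at ht1
        change δ.src = d.src at hs2; change a.tgt = d.src at ht2
        -- hs1 : γ.src = c.src, ht1 : a.tgt = c.src
        have hss : γ.src = δ.src := by
          have e1 : γ.src = c.src := hs1
          have e2 : a.tgt = c.src := ht1
          have e3 : a.tgt = d.src := ht2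
          have e4 : δ.src = d.src := hs2
          rw [e1, ← e2, e3, ← e4]
        refine GpdMor.ext' hss htd ?_
        simp only [GpdMor.comp, GpdMor.id] at hh1 hh2
        -- hh1 : γ.hom ≫ eqToHom hs.symm ≫ a.hom = eqToHom hs1 ≫ 𝟙 _ ≫ eqToHom ht1.symm
        have key1 : γ.hom = (eqToHom hs1 ≫ 𝟙 c.src ≫ eqToHom ht1.symm) ≫
            CategoryTheory.inv a.hom ≫ eqToHom hs := by
          rw [← hh1]; simp
        have key2 : δ.hom = (eqToHom hs2 ≫ 𝟙 d.src ≫ eqToHom ht2.symm) ≫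
            CategoryTheory.inv a.hom ≫ eqToHom hs' := by
          rw [← hh2]; simp
        rw [key1, key2]
        simp only [GpdMor.comp, GpdMor.id, Category.id_comp, Category.comp_id,
          eqToHom_trans, eqToHom_trans_assoc, Category.assoc]
    · rintro ⟨hsrc, htgt⟩
      exact ⟨starSet Λ, starSet_inverse hsrc htgt⟩
  · rintro ⟨hsrc, htgt⟩
    exact starSet_inverse hsrc htgt
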